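/- Let u ∈ C̃²(T³) solve the reduced Calabi–Yau equation (u_xx + 1)(u_yy + u_tt + u_t + 1) − u_xy² − u_xt² = e^F with F continuous and 1-periodic. Then for every real number p ≥ 2: ∫_{[0,1]³} |u|^{p−2} |∇u|² dV ≤ (1/4) ‖u‖_{L^p}^p + (5p/4) · |1 + e^F|_{C⁰} · ‖u‖_{L^p}^{p−1}, where |∇u|² = u_x² + u_y² + u_t². (Equivalently, ‖∇(|u|^{p/2})‖_{L²}² ≤ (p²/16) ‖u‖_{L^p}^p + (5p³/16) |1+e^F|_{C⁰} ‖u‖_{L^p}^{p−1}.) -/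

import Mathlib

open MeasureTheory

noncomputable section

/-- Points of `ℝ³`, written as `ℝ × ℝ × ℝ`. -/
abbrev R3 := ℝ × ℝ × ℝ

/-- The coordinate direction `x`. -/
def vx : R3 := (1, 0, 0)
/-- The coordinate direction `y`. -/
def vy : R3 := (0, 1, 0)
/-- The coordinate direction `t`. -/
def vt : R3 := (0, 0, 1)

/-- Partial (directional) derivative in the direction `e`. -/
def pd (e : R3) (u : R3 → ℝ) : R3 → ℝ := fun p => fderiv ℝ u p e

/-- `1`-periodicity in each of the three variables. -/
def Periodic3 (u : R3 → ℝ) : Prop :=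
  ∀ p : R3, u (p + vx) = u p ∧ u (p + vy) = u p ∧ u (p + vt) = u p

/-- The unit cube `[0,1]³`. -/
def cube : Set R3 := Set.Icc (0, 0, 0) (1, 1, 1)

/-- Zero mean over the unit cube. -/
def ZeroMean (u : R3 → ℝ) : Prop := ∫ p in cube, u p = 0

/-- The reduced Calabi–Yau equation
`(u_xx + 1)(u_yy + u_tt + u_t + 1) − u_xy² − u_xt² = e^F` on `ℝ³`. -/
def CYeq (F u : R3 → ℝ) : Prop :=
  ∀ p : R3,
    (pd vx (pd vx u) p + 1)
        * (pd vy (pd vy u) p + pd vt (pd vt u) p + pd vt u p + 1)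
      - (pd vy (pd vx u) p) ^ 2 - (pd vt (pd vx u) p) ^ 2 = Real.exp (F p)

/-- The Euclidean norm on `ℝ³ = ℝ × ℝ × ℝ`. -/
def enorm3 (h : R3) : ℝ := Real.sqrt (h.1 ^ 2 + h.2.1 ^ 2 + h.2.2 ^ 2)

namespace CY6

abbrev I01 : Set ℝ := Set.Icc 0 1

def μI : Measure ℝ := volume.restrict I01

def μ3 : Measure R3 := μI.prod (μI.prod μI)

lemma cube_eq : cube = I01 ×ˢ (I01 ×ˢ I01) := by
  rw [cube, Set.Icc_prod_eq, Set.Icc_prod_eq]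

lemma μ3_eq : μ3 = volume.restrict cube := by
  rw [cube_eq, μ3, μI, Measure.prod_restrict, Measure.prod_restrict]
  congr 1

instance : IsProbabilityMeasure μI := by
  constructor
  rw [μI, Measure.restrict_apply_univ, Real.volume_Icc]
  norm_num

instance : IsProbabilityMeasure μ3 := by
  rw [μ3]; infer_instance

lemma integrable_μ3 {f : R3 → ℝ} (hf : Continuous f) : Integrable f μ3 := by
  rw [μ3_eq]
  exact hf.continuousOn.integrableOn_compact (isCompact_Icc)

lemma cube_integral_eq (f : R3 → ℝ) : ∫ p in cube, f p = ∫ p, f p ∂μ3 := by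
  rw [μ3_eq]

/-! ### pd API -/

lemma contDiff_pd {n : ℕ∞} (e : R3) {u : R3 → ℝ} (hu : ContDiff ℝ (n + 1) u) :
    ContDiff ℝ n (pd e u) := by
  have h1 : ContDiff ℝ n (fderiv ℝ u) := hu.fderiv_right (le_refl _)
  exact h1.clm_apply contDiff_const

lemma continuous_pd (e : R3) {u : R3 → ℝ} (hu : ContDiff ℝ 1 u) :
    Continuous (pd e u) := by
  have h := contDiff_one_iff_fderiv.mp hu
  exact h.2.clm_apply continuous_const

lemma fderiv_shift (f : R3 → ℝ) (c p : R3) :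
    fderiv ℝ (fun q => f (q + c)) p = fderiv ℝ f (p + c) := by
  by_cases h : DifferentiableAt ℝ f (p + c)
  · have h2 : HasFDerivAt (fun q : R3 => q + c) (ContinuousLinearMap.id ℝ R3) p :=
      (hasFDerivAt_id p).add_const c
    have h3 := h.hasFDerivAt.comp p h2
    exact h3.fderiv
  · have h' : ¬ DifferentiableAt ℝ (fun q => f (q + c)) p := by
      intro hc
      apply h
      have h2 : DifferentiableAt ℝ (fun q : R3 => q - c) (p + c) :=
        differentiableAt_id.sub_const c
      have hc' : DifferentiableAt ℝ (fun q => f (q + c)) (p + c - c) :=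
        (add_sub_cancel_right p c).symm ▸ hc
      have h3 := hc'.comp (p + c) h2
      have h4 : ((fun q => f (q + c)) ∘ (fun q : R3 => q - c)) = f := by
        funext q; simp
      rwa [h4] at h3
    rw [fderiv_zero_of_not_differentiableAt h, fderiv_zero_of_not_differentiableAt h']


/-! ### Periodic3 API -/

lemma Periodic3.pdP' (e : R3) {u : R3 → ℝ} (hu : Periodic3 u) : Periodic3 (pd e u) := by
  have hx : (fun q => u (q + vx)) = u := funext fun q => (hu q).1
  have hy : (fun q => u (q + vy)) = u := funext fun q => (hu q).2.1
  have ht : (fun q => u (q + vt)) = u := funext fun q => (hu q).2.2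
  intro p
  refine ⟨?_, ?_, ?_⟩ <;> show fderiv ℝ u _ e = fderiv ℝ u p e
  · rw [← fderiv_shift u vx p, hx]
  · rw [← fderiv_shift u vy p, hy]
  · rw [← fderiv_shift u vt p, ht]

lemma _root_.Periodic3.mulP {f g : R3 → ℝ} (hf : Periodic3 f) (hg : Periodic3 g) :
    Periodic3 (fun p => f p * g p) := by
  intro p
  refine ⟨?_, ?_, ?_⟩
  · show f (p + vx) * g (p + vx) = f p * g p; rw [(hf p).1, (hg p).1]
  · show f (p + vy) * g (p + vy) = f p * g p; rw [(hf p).2.1, (hg p).2.1]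
  · show f (p + vt) * g (p + vt) = f p * g p; rw [(hf p).2.2, (hg p).2.2]

lemma _root_.Periodic3.compP (g : ℝ → ℝ) {f : R3 → ℝ} (hf : Periodic3 f) :
    Periodic3 (fun p => g (f p)) := by
  intro p
  refine ⟨?_, ?_, ?_⟩
  · show g (f (p + vx)) = g (f p); rw [(hf p).1]
  · show g (f (p + vy)) = g (f p); rw [(hf p).2.1]
  · show g (f (p + vt)) = g (f p); rw [(hf p).2.2]

lemma _root_.Periodic3.transP (c : R3) {f : R3 → ℝ} (hf : Periodic3 f) :
    Periodic3 (fun p => f (p + c)) := by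
  intro p
  refine ⟨?_, ?_, ?_⟩
  · show f (p + vx + c) = f (p + c); rw [add_right_comm]; exact (hf _).1
  · show f (p + vy + c) = f (p + c); rw [add_right_comm]; exact (hf _).2.1
  · show f (p + vt + c) = f (p + c); rw [add_right_comm]; exact (hf _).2.2

lemma per_int {f : R3 → ℝ} {v : R3} (hv : ∀ p, f (p + v) = f p) :
    ∀ (n : ℤ) (p : R3), f (p + n • v) = f p := by
  have key : ∀ (n : ℕ) (p : R3), f (p + n • v) = f p := by
    intro n
    induction n with
    | zero => intro p; simp
    | succ k ih =>
        intro p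
        have : p + (k + 1 : ℕ) • v = (p + v) + k • v := by
          push_cast [add_smul, one_smul]; abel
        rw [this, ih, hv]
  intro n p
  rcases n with k | k
  · simpa using key k p
  · have h1 := key (k + 1) (p + Int.negSucc k • v)
    have h3 : Int.negSucc k • v + (k + 1 : ℕ) • v = (0 : R3) := by
      have hn : (k + 1 : ℕ) • v = ((k + 1 : ℕ) : ℤ) • v := (natCast_zsmul v _).symm
      rw [hn, ← add_smul]
      have : (Int.negSucc k + ((k + 1 : ℕ) : ℤ)) = 0 := by
        rw [Int.negSucc_eq]; push_cast; ring
      rw [this, zero_smul]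
    have h2 : p + Int.negSucc k • v + (k + 1 : ℕ) • v = p := by
      rw [add_assoc, h3, add_zero]
    rw [h2] at h1
    exact h1.symm

lemma exists_cube_rep {f : R3 → ℝ} (hf : Periodic3 f) (p : R3) :
    ∃ q ∈ cube, f q = f p := by
  obtain ⟨x, y, t⟩ := p
  refine ⟨(Int.fract x, Int.fract y, Int.fract t), ?_, ?_⟩
  · constructor
    · exact ⟨Int.fract_nonneg x, Int.fract_nonneg y, Int.fract_nonneg t⟩
    · exact ⟨(Int.fract_lt_one x).le, (Int.fract_lt_one y).le, (Int.fract_lt_one t).le⟩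
  · have hx := fun p => (hf p).1
    have hy := fun p => (hf p).2.1
    have ht := fun p => (hf p).2.2
    have e1 : ((Int.fract x, Int.fract y, Int.fract t) : R3)
        = ((x, y, t) : R3) + (-⌊x⌋) • vx + (-⌊y⌋) • vy + (-⌊t⌋) • vt := by
      simp only [vx, vy, vt, Prod.smul_mk, Prod.mk_add_mk, smul_zero, zsmul_eq_mul,
        Int.fract, Prod.mk.injEq]
      refine ⟨by push_cast; ring, by push_cast; ring, by push_cast; ring⟩
    rw [e1, per_int ht, per_int hy, per_int hx]

lemma bound_of_periodic {f : R3 → ℝ} (hc : Continuous f) (hf : Periodic3 f) :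
    ∃ M : ℝ, 0 ≤ M ∧ ∀ p, |f p| ≤ M := by
  have hne : cube.Nonempty := ⟨(0, 0, 0), by
    constructor
    · exact le_refl _
    · exact ⟨zero_le_one, zero_le_one, zero_le_one⟩⟩
  obtain ⟨q₀, _, hmax⟩ := IsCompact.exists_isMaxOn (isCompact_Icc) hne
    ((continuous_abs.comp hc).continuousOn)
  refine ⟨|f q₀|, abs_nonneg _, fun p => ?_⟩
  obtain ⟨q, hq, he⟩ := exists_cube_rep hf p
  rw [← he]
  exact hmax hq


/-! ### Fubini and 1D reductions -/

lemma int1 {g : ℝ → ℝ} (hg : Continuous g) : Integrable g μI := by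
  rw [μI]
  exact hg.continuousOn.integrableOn_compact isCompact_Icc

lemma int2 {g : ℝ × ℝ → ℝ} (hg : Continuous g) : Integrable g (μI.prod μI) := by
  have h : μI.prod μI = volume.restrict (I01 ×ˢ I01) := by
    rw [μI, Measure.prod_restrict]
    rfl
  rw [h, Set.Icc_prod_Icc]
  exact hg.continuousOn.integrableOn_compact isCompact_Icc

lemma muI_eq (h : ℝ → ℝ) : ∫ a, h a ∂μI = ∫ a in (0:ℝ)..1, h a := by
  rw [μI]
  show ∫ a in I01, h a = _
  rw [MeasureTheory.integral_Icc_eq_integral_Ioc, ← intervalIntegral.integral_of_le zero_le_one]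

lemma slice_x {V : R3 → ℝ} (hV : Differentiable ℝ V) (y t a : ℝ) :
    HasDerivAt (fun x => V (x, y, t)) (pd vx V (a, y, t)) a := by
  have hg : HasDerivAt (fun x : ℝ => ((x, y, t) : R3)) vx a :=
    HasDerivAt.prodMk (hasDerivAt_id a) (HasDerivAt.prodMk (hasDerivAt_const a y) (hasDerivAt_const a t))
  exact (hV (a, y, t)).hasFDerivAt.comp_hasDerivAt a hg

lemma slice_y {V : R3 → ℝ} (hV : Differentiable ℝ V) (x t a : ℝ) :
    HasDerivAt (fun y => V (x, y, t)) (pd vy V (x, a, t)) a := by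
  have hg : HasDerivAt (fun y : ℝ => ((x, y, t) : R3)) vy a :=
    HasDerivAt.prodMk (hasDerivAt_const a x) (HasDerivAt.prodMk (hasDerivAt_id a) (hasDerivAt_const a t))
  exact (hV (x, a, t)).hasFDerivAt.comp_hasDerivAt a hg

lemma slice_t {V : R3 → ℝ} (hV : Differentiable ℝ V) (x y a : ℝ) :
    HasDerivAt (fun t => V (x, y, t)) (pd vt V (x, y, a)) a := by
  have hg : HasDerivAt (fun t : ℝ => ((x, y, t) : R3)) vt a :=
    HasDerivAt.prodMk (hasDerivAt_const a x) (HasDerivAt.prodMk (hasDerivAt_const a y) (hasDerivAt_id a))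
  exact (hV (x, y, a)).hasFDerivAt.comp_hasDerivAt a hg

lemma line_zero {g g' : ℝ → ℝ} (hd : ∀ a, HasDerivAt g (g' a) a) (hc : Continuous g')
    (hper : g 1 = g 0) : ∫ a, g' a ∂μI = 0 := by
  rw [muI_eq, intervalIntegral.integral_eq_sub_of_hasDerivAt (fun a _ => hd a)
    (hc.intervalIntegrable 0 1), hper, sub_self]

lemma iter3 {f : R3 → ℝ} (hf : Continuous f) :
    ∫ p, f p ∂μ3 = ∫ x, ∫ y, ∫ t, f (x, (y, t)) ∂μI ∂μI ∂μI := by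
  rw [μ3, MeasureTheory.integral_prod _ (integrable_μ3 hf)]
  have h1 : ∀ x : ℝ, ∫ q, f (x, q) ∂(μI.prod μI) = ∫ y, ∫ t, f (x, (y, t)) ∂μI ∂μI :=
    fun x => MeasureTheory.integral_prod _ (int2 (hf.comp (continuous_const.prodMk continuous_id)))
  simp only [h1]

lemma integral_pd_x_zero {V : R3 → ℝ} (hV : ContDiff ℝ 1 V) (hper : Periodic3 V) :
    ∫ p, pd vx V p ∂μ3 = 0 := by
  have hc : Continuous (pd vx V) := continuous_pd vx hV
  rw [μ3, MeasureTheory.integral_prod_symm _ (integrable_μ3 hc)]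
  have hz : ∀ q : ℝ × ℝ, ∫ x, pd vx V (x, q) ∂μI = 0 := by
    rintro ⟨y, t⟩
    refine line_zero (g := fun x => V (x, y, t)) (fun a => slice_x (hV.differentiable one_ne_zero) y t a)
      (hc.comp (continuous_id.prodMk continuous_const)) ?_
    have h := (hper (0, y, t)).1
    simpa [vx, Prod.ext_iff] using h
  simp only [hz, integral_zero]

lemma integral_pd_y_zero {V : R3 → ℝ} (hV : ContDiff ℝ 1 V) (hper : Periodic3 V) :
    ∫ p, pd vy V p ∂μ3 = 0 := by
  have hc : Continuous (pd vy V) := continuous_pd vy hV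
  rw [μ3, MeasureTheory.integral_prod _ (integrable_μ3 hc)]
  have hz : ∀ x : ℝ, ∫ q, pd vy V (x, q) ∂(μI.prod μI) = 0 := by
    intro x
    have hcont : Continuous (fun q : ℝ × ℝ => pd vy V (x, q)) :=
      hc.comp (continuous_const.prodMk continuous_id)
    rw [MeasureTheory.integral_prod_symm (fun q : ℝ × ℝ => pd vy V (x, q)) (int2 hcont)]
    have hz2 : ∀ t : ℝ, ∫ y, pd vy V (x, (y, t)) ∂μI = 0 := by
      intro t
      refine line_zero (g := fun y => V (x, y, t)) (fun a => slice_y (hV.differentiable one_ne_zero) x t a)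
        (hc.comp (continuous_const.prodMk (continuous_id.prodMk continuous_const))) ?_
      have h := (hper (x, 0, t)).2.1
      simpa [vy, Prod.ext_iff] using h
    simp only [hz2, integral_zero]
  simp only [hz, integral_zero]

lemma integral_pd_t_zero {V : R3 → ℝ} (hV : ContDiff ℝ 1 V) (hper : Periodic3 V) :
    ∫ p, pd vt V p ∂μ3 = 0 := by
  have hc : Continuous (pd vt V) := continuous_pd vt hV
  rw [iter3 hc]
  have hz2 : ∀ x y : ℝ, ∫ t, pd vt V (x, (y, t)) ∂μI = 0 := by
    intro x y
    refine line_zero (g := fun t => V (x, y, t)) (fun a => slice_t (hV.differentiable one_ne_zero) x y a)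
      (hc.comp (continuous_const.prodMk (continuous_const.prodMk continuous_id))) ?_
    have h := (hper (x, y, 0)).2.2
    simpa [vt, Prod.ext_iff] using h
  simp only [hz2, integral_zero]

/-! ### Shift invariance -/

lemma shift_y {f : R3 → ℝ} (hf : Continuous f) (hp : Periodic3 f) (s : ℝ) :
    ∫ p, f (p + s • vy) ∂μ3 = ∫ p, f p ∂μ3 := by
  have he : (fun p : R3 => f (p + s • vy)) = fun p : R3 => f (p.1, (p.2.1 + s, p.2.2)) := by
    funext p
    congr 1
    simp [vy, Prod.ext_iff]
  have hc2 : Continuous (fun p : R3 => f (p.1, (p.2.1 + s, p.2.2))) := by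
    apply hf.comp
    exact continuous_fst.prodMk (((continuous_fst.comp continuous_snd).add
      continuous_const).prodMk (continuous_snd.comp continuous_snd))
  rw [he, iter3 hc2, iter3 hf]
  have key : ∀ x : ℝ, (∫ y, ∫ t, f (x, (y + s, t)) ∂μI ∂μI) = ∫ y, ∫ t, f (x, (y, t)) ∂μI ∂μI := by
    intro x
    have hper1 : Function.Periodic (fun y => ∫ t, f (x, (y, t)) ∂μI) 1 := by
      intro y
      have h : ∀ t : ℝ, f (x, (y + 1, t)) = f (x, (y, t)) := by
        intro t
        have h' := (hp (x, y, t)).2.1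
        simpa [vy, Prod.ext_iff] using h'
      simp only [h]
    have e2 : (fun y => ∫ t, f (x, (y + s, t)) ∂μI)
        = fun y => (fun z => ∫ t, f (x, (z, t)) ∂μI) (y + s) := rfl
    rw [e2, muI_eq, muI_eq,
      intervalIntegral.integral_comp_add_right (fun z => ∫ t, f (x, (z, t)) ∂μI) s]
    have h2 := hper1.intervalIntegral_add_eq s 0
    simpa [zero_add, add_comm] using h2
  simp only [key]

lemma shift_t {f : R3 → ℝ} (hf : Continuous f) (hp : Periodic3 f) (s : ℝ) :
    ∫ p, f (p + s • vt) ∂μ3 = ∫ p, f p ∂μ3 := by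
  have he : (fun p : R3 => f (p + s • vt)) = fun p : R3 => f (p.1, (p.2.1, p.2.2 + s)) := by
    funext p
    congr 1
    simp [vt, Prod.ext_iff]
  have hc2 : Continuous (fun p : R3 => f (p.1, (p.2.1, p.2.2 + s))) := by
    apply hf.comp
    exact continuous_fst.prodMk ((continuous_fst.comp continuous_snd).prodMk
      ((continuous_snd.comp continuous_snd).add continuous_const))
  rw [he, iter3 hc2, iter3 hf]
  have key : ∀ x y : ℝ, (∫ t, f (x, (y, t + s)) ∂μI) = ∫ t, f (x, (y, t)) ∂μI := by
    intro x y
    have hper1 : Function.Periodic (fun t => f (x, (y, t))) 1 := by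
      intro t
      have h := (hp (x, y, t)).2.2
      simpa [vt, Prod.ext_iff] using h
    rw [muI_eq, muI_eq, intervalIntegral.integral_comp_add_right (fun t => f (x, (y, t))) s]
    have h2 := hper1.intervalIntegral_add_eq s 0
    simpa [zero_add, add_comm] using h2
  simp only [key]


/-! ### pd computation helpers -/

lemma pd_mul_pt {f g : R3 → ℝ} {p : R3} (hf : DifferentiableAt ℝ f p)
    (hg : DifferentiableAt ℝ g p) (e : R3) :
    pd e (fun q => f q * g q) p = pd e f p * g p + f p * pd e g p := by
  show fderiv ℝ (fun q => f q * g q) p e = _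
  rw [fderiv_fun_mul hf hg]
  simp only [ContinuousLinearMap.add_apply, ContinuousLinearMap.coe_smul',
    Pi.smul_apply, smul_eq_mul]
  show f p * fderiv ℝ g p e + g p * fderiv ℝ f p e
      = fderiv ℝ f p e * g p + f p * fderiv ℝ g p e
  ring

lemma _root_.Periodic3.pdP (e : R3) {u : R3 → ℝ} (hu : Periodic3 u) : Periodic3 (pd e u) :=
  CY6.Periodic3.pdP' e hu

lemma _root_.Periodic3.subP {f g : R3 → ℝ} (hf : Periodic3 f) (hg : Periodic3 g) :
    Periodic3 (fun p => f p - g p) := by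
  intro p
  refine ⟨?_, ?_, ?_⟩
  · show f (p + vx) - g (p + vx) = f p - g p; rw [(hf p).1, (hg p).1]
  · show f (p + vy) - g (p + vy) = f p - g p; rw [(hf p).2.1, (hg p).2.1]
  · show f (p + vt) - g (p + vt) = f p - g p; rw [(hf p).2.2, (hg p).2.2]

lemma hasDerivAt_line {β : R3 → ℝ} (hβ : Differentiable ℝ β) (p v : R3) (s : ℝ) :
    HasDerivAt (fun s' : ℝ => β (p + s' • v)) (pd v β (p + s • v)) s := by
  have hg : HasDerivAt (fun s' : ℝ => p + s' • v) v s := by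
    simpa using ((hasDerivAt_id s).smul_const v).const_add p
  exact (hβ (p + s • v)).hasFDerivAt.comp_hasDerivAt s hg

lemma diff_bound {β : R3 → ℝ} (hβ : Differentiable ℝ β) {v : R3} {M : ℝ}
    (hM : ∀ q, |pd v β q| ≤ M) (p : R3) (h : ℝ) :
    |β (p + h • v) - β p| ≤ M * |h| := by
  rcases le_or_gt 0 h with h0 | h0
  · have key := norm_image_sub_le_of_norm_deriv_le_segment'
      (f := fun s => β (p + s • v)) (f' := fun s => pd v β (p + s • v)) (a := 0) (b := h)
      (fun s _ => (hasDerivAt_line hβ p v s).hasDerivWithinAt)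
      (fun s _ => by rw [Real.norm_eq_abs]; exact hM _) h (Set.right_mem_Icc.mpr h0)
    rw [Real.norm_eq_abs] at key
    calc |β (p + h • v) - β p| = |β (p + h • v) - β (p + (0:ℝ) • v)| := by norm_num
      _ ≤ M * (h - 0) := key
      _ = M * |h| := by rw [abs_of_nonneg h0, sub_zero]
  · have hder : ∀ s : ℝ, HasDerivAt (fun s' : ℝ => β (p + (-s') • v))
        (pd v β (p + (-s) • v) * (-1)) s := by
      intro s
      exact (hasDerivAt_line hβ p v (-s)).comp s (hasDerivAt_neg s)
    have key := norm_image_sub_le_of_norm_deriv_le_segment'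
      (f := fun s => β (p + (-s) • v)) (f' := fun s => pd v β (p + (-s) • v) * (-1))
      (a := 0) (b := -h)
      (fun s _ => (hder s).hasDerivWithinAt)
      (fun s _ => by rw [Real.norm_eq_abs, abs_mul]; simpa using hM _)
      (-h) (Set.right_mem_Icc.mpr (by linarith))
    rw [Real.norm_eq_abs] at key
    calc |β (p + h • v) - β p| = |β (p + (-(-h)) • v) - β (p + (-(0:ℝ)) • v)| := by norm_num
      _ ≤ M * (-h - 0) := key
      _ = M * |h| := by rw [abs_of_neg h0]; ring

lemma tendsto_diffquot {β : R3 → ℝ} (hβ : Differentiable ℝ β) (v p : R3) :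
    Filter.Tendsto (fun h : ℝ => (β (p + h • v) - β p) / h)
      (nhdsWithin 0 {(0:ℝ)}ᶜ) (nhds (pd v β p)) := by
  have hd : HasDerivAt (fun s : ℝ => β (p + s • v)) (pd v β p) 0 := by
    have h1 := hasDerivAt_line hβ p v 0
    simpa using h1
  have h2 := hasDerivAt_iff_tendsto_slope.mp hd
  refine Filter.Tendsto.congr (fun h => ?_) h2
  rw [slope_def_field]
  simp

def seqh (n : ℕ) : ℝ := 1 / ((n : ℝ) + 1)

lemma seqh_pos (n : ℕ) : 0 < seqh n := by rw [seqh]; positivity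

lemma seqh_ne (n : ℕ) : seqh n ≠ 0 := (seqh_pos n).ne'

lemma htend_seq : Filter.Tendsto seqh Filter.atTop (nhdsWithin 0 {(0:ℝ)}ᶜ) := by
  apply tendsto_nhdsWithin_of_tendsto_nhds_of_eventually_within
  · exact tendsto_one_div_add_atTop_nhds_zero_nat
  · exact Filter.Eventually.of_forall fun n => by
      simp only [Set.mem_compl_iff, Set.mem_singleton_iff]
      exact seqh_ne n

lemma htend_seq_neg : Filter.Tendsto (fun n => -seqh n) Filter.atTop
    (nhdsWithin 0 {(0:ℝ)}ᶜ) := by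
  apply tendsto_nhdsWithin_of_tendsto_nhds_of_eventually_within
  · have h1 : Filter.Tendsto seqh Filter.atTop (nhds 0) := tendsto_one_div_add_atTop_nhds_zero_nat
    simpa using h1.neg
  · exact Filter.Eventually.of_forall fun n => by
      simp only [Set.mem_compl_iff, Set.mem_singleton_iff, neg_eq_zero]
      exact seqh_ne n

/-! ### The swap lemma -/

lemma swap_x {α β : R3 → ℝ} (v : R3) (hα : ContDiff ℝ 1 α) (hβ : ContDiff ℝ 1 β)
    (hpα : Periodic3 α) (hpβ : Periodic3 β)
    (hsh : ∀ (g : R3 → ℝ), Continuous g → Periodic3 g → ∀ s : ℝ,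
      (∫ p, g (p + s • v) ∂μ3) = ∫ p, g p ∂μ3) :
    ∫ p, pd vx α p * pd v β p ∂μ3 = ∫ p, pd v α p * pd vx β p ∂μ3 := by
  have dα := hα.differentiable one_ne_zero
  have dβ := hβ.differentiable one_ne_zero
  have cα := hα.continuous
  have cβ := hβ.continuous
  have cA : Continuous (pd vx α) := continuous_pd vx hα
  have cAv : Continuous (pd v α) := continuous_pd v hα
  have cBx : Continuous (pd vx β) := continuous_pd vx hβ
  have cBv : Continuous (pd v β) := continuous_pd v hβ
  have pA : Periodic3 (pd vx α) := hpα.pdP vx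
  have pAv : Periodic3 (pd v α) := hpα.pdP v
  have pBx : Periodic3 (pd vx β) := hpβ.pdP vx
  have pBv : Periodic3 (pd v β) := hpβ.pdP v
  obtain ⟨MA, hMA0, hMA⟩ := bound_of_periodic cA pA
  obtain ⟨MAv, hMAv0, hMAv⟩ := bound_of_periodic cAv pAv
  obtain ⟨MBx, hMBx0, hMBx⟩ := bound_of_periodic cBx pBx
  obtain ⟨MBv, hMBv0, hMBv⟩ := bound_of_periodic cBv pBv
  -- Step A : discrete integration by parts
  have stepA : ∀ n : ℕ,
      (∫ p, pd vx α p * ((β (p + seqh n • v) - β p) / seqh n) ∂μ3)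
      = - ∫ p, ((1 / seqh n) * (α (p + (-(seqh n • v))) - α p)) * pd vx β p ∂μ3 := by
    intro n
    set h : ℝ := seqh n with hdef
    set σ : R3 := h • v with hσ
    set γ : R3 → ℝ := fun p => (1 / h) * (α (p + (-σ)) - α p) with hγdef
    have hinner : ContDiff ℝ 1 (fun p : R3 => α (p + (-σ))) := by
      exact hα.comp (contDiff_id.add contDiff_const)
    have hγC : ContDiff ℝ 1 γ := by
      rw [hγdef]; exact contDiff_const.mul (hinner.sub hα)
    have hγper : Periodic3 γ := by
      have h1 : Periodic3 (fun p => α (p + (-σ)) - α p) :=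
        Periodic3.subP (Periodic3.transP (-σ) hpα) hpα
      exact Periodic3.compP (fun s => (1 / h) * s) h1
    have hdsub : ∀ p : R3, DifferentiableAt ℝ (fun q => α (q + (-σ)) - α q) p := fun p => by
      exact ((dα _).comp p (differentiableAt_id.add_const _)).sub (dα p)
    have hdshift : ∀ p : R3, DifferentiableAt ℝ (fun q : R3 => α (q + (-σ))) p := fun p => by
      exact (dα _).comp p (differentiableAt_id.add_const _)
    have pdγ : ∀ p, pd vx γ p = (1 / h) * (pd vx α (p + (-σ)) - pd vx α p) := by
      intro p
      show fderiv ℝ γ p vx = _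
      rw [hγdef, fderiv_const_mul (hdsub p)]
      simp only [ContinuousLinearMap.coe_smul', Pi.smul_apply, smul_eq_mul]
      congr 1
      rw [fderiv_fun_sub (hdshift p) (dα p)]
      simp only [ContinuousLinearMap.coe_sub', Pi.sub_apply]
      congr 1
      rw [fderiv_shift α (-σ) p]
      rfl
    -- a1 : shift identity
    have ha1 : (∫ p, pd vx α p * β (p + σ) ∂μ3)
        = ∫ p, pd vx α (p + (-σ)) * β p ∂μ3 := by
      have hg : Continuous (fun p : R3 => pd vx α (p + (-σ)) * β p) :=
        (cA.comp (continuous_id.add continuous_const)).mul cβ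
      have hgp : Periodic3 (fun p : R3 => pd vx α (p + (-σ)) * β p) :=
        Periodic3.mulP (Periodic3.transP (-σ) pA) hpβ
      have h1 := hsh (fun p : R3 => pd vx α (p + (-σ)) * β p) hg hgp h
      have e1 : ∀ p : R3, pd vx α (p + h • v + (-σ)) * β (p + h • v)
          = pd vx α p * β (p + σ) := by
        intro p
        rw [hσ, add_neg_cancel_right]
      calc ∫ p, pd vx α p * β (p + σ) ∂μ3
          = ∫ p, pd vx α (p + h • v + (-σ)) * β (p + h • v) ∂μ3 := by
            refine integral_congr_ae (Filter.Eventually.of_forall fun p => ?_)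
            exact (e1 p).symm
        _ = ∫ p, pd vx α (p + (-σ)) * β p ∂μ3 := h1
    -- integrability facts
    have hiAβσ : Integrable (fun p => pd vx α p * β (p + σ)) μ3 :=
      integrable_μ3 (cA.mul (cβ.comp (continuous_id.add continuous_const)))
    have hiAβ : Integrable (fun p => pd vx α p * β p) μ3 := integrable_μ3 (cA.mul cβ)
    have hiAσβ : Integrable (fun p => pd vx α (p + (-σ)) * β p) μ3 :=
      integrable_μ3 ((cA.comp (continuous_id.add continuous_const)).mul cβ)
    have cpdγ : Continuous (pd vx γ) := continuous_pd vx hγC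
    -- IBP
    have hIBP : (∫ p, pd vx γ p * β p ∂μ3) = - ∫ p, γ p * pd vx β p ∂μ3 := by
      have hVC : ContDiff ℝ 1 (fun p => γ p * β p) := hγC.mul hβ
      have hVper : Periodic3 (fun p => γ p * β p) := Periodic3.mulP hγper hpβ
      have h0 := integral_pd_x_zero hVC hVper
      have hexp : ∀ p, pd vx (fun q => γ q * β q) p = pd vx γ p * β p + γ p * pd vx β p :=
        fun p => pd_mul_pt ((hγC.differentiable one_ne_zero) p) (dβ p) vx
      rw [integral_congr_ae (Filter.Eventually.of_forall hexp)] at h0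
      rw [integral_add (integrable_μ3 (cpdγ.fun_mul cβ))
        (integrable_μ3 (hγC.continuous.fun_mul cBx))] at h0
      linarith
    calc ∫ p, pd vx α p * ((β (p + σ) - β p) / h) ∂μ3
        = ∫ p, (1 / h) * (pd vx α p * β (p + σ) - pd vx α p * β p) ∂μ3 := by
          refine integral_congr_ae (Filter.Eventually.of_forall fun p => ?_)
          ring
      _ = (1 / h) * ((∫ p, pd vx α p * β (p + σ) ∂μ3) - ∫ p, pd vx α p * β p ∂μ3) := by
          rw [MeasureTheory.integral_const_mul, integral_sub hiAβσ hiAβ]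
      _ = (1 / h) * ((∫ p, pd vx α (p + (-σ)) * β p ∂μ3) - ∫ p, pd vx α p * β p ∂μ3) := by
          rw [ha1]
      _ = ∫ p, (1 / h) * (pd vx α (p + (-σ)) * β p - pd vx α p * β p) ∂μ3 := by
          rw [MeasureTheory.integral_const_mul, integral_sub hiAσβ hiAβ]
      _ = ∫ p, pd vx γ p * β p ∂μ3 := by
          refine integral_congr_ae (Filter.Eventually.of_forall fun p => ?_)
          simp only [pdγ]
          ring
      _ = - ∫ p, γ p * pd vx β p ∂μ3 := hIBP
  -- Step B : limit of left-hand sides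
  have stepB : Filter.Tendsto
      (fun n => ∫ p, pd vx α p * ((β (p + seqh n • v) - β p) / seqh n) ∂μ3)
      Filter.atTop (nhds (∫ p, pd vx α p * pd v β p ∂μ3)) := by
    apply MeasureTheory.tendsto_integral_of_dominated_convergence (bound := fun _ => MA * MBv)
    · intro n
      exact (integrable_μ3 (cA.mul (((cβ.comp (continuous_id.add continuous_const)).sub
        cβ).div_const _))).aestronglyMeasurable
    · exact integrable_const _
    · intro n
      refine Filter.Eventually.of_forall fun p => ?_
      rw [Real.norm_eq_abs, abs_mul, abs_div]
      have h1 : |β (p + seqh n • v) - β p| ≤ MBv * |seqh n| := diff_bound dβ hMBv p (seqh n)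
      have h2 : |β (p + seqh n • v) - β p| / |seqh n| ≤ MBv := by
        rw [div_le_iff₀ (abs_pos.mpr (seqh_ne n))]
        exact h1
      exact mul_le_mul (hMA p) h2 (by positivity) hMA0
    · refine Filter.Eventually.of_forall fun p => ?_
      exact ((tendsto_diffquot dβ v p).comp htend_seq).const_mul (pd vx α p)
  -- Step C : limit of right-hand sides
  have stepC : Filter.Tendsto
      (fun n => ∫ p, ((1 / seqh n) * (α (p + (-(seqh n • v))) - α p)) * pd vx β p ∂μ3)
      Filter.atTop (nhds (∫ p, (-(pd v α p)) * pd vx β p ∂μ3)) := by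
    apply MeasureTheory.tendsto_integral_of_dominated_convergence (bound := fun _ => MAv * MBx)
    · intro n
      exact (integrable_μ3 ((continuous_const.mul ((cα.comp
        (continuous_id.add continuous_const)).sub cα)).mul cBx)).aestronglyMeasurable
    · exact integrable_const _
    · intro n
      refine Filter.Eventually.of_forall fun p => ?_
      rw [Real.norm_eq_abs, abs_mul]
      have h1 : |α (p + (-(seqh n • v))) - α p| ≤ MAv * |seqh n| := by
        have h3 := diff_bound dα hMAv p (-(seqh n))
        rw [neg_smul] at h3
        rwa [abs_neg] at h3
      have h2 : |(1 / seqh n) * (α (p + (-(seqh n • v))) - α p)| ≤ MAv := by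
        rw [abs_mul]
        have e3 : |1 / seqh n| * |α (p + (-(seqh n • v))) - α p|
            = |α (p + (-(seqh n • v))) - α p| / |seqh n| := by
          rw [abs_div, abs_one]
          ring
        rw [e3, div_le_iff₀ (abs_pos.mpr (seqh_ne n))]
        exact h1
      exact mul_le_mul h2 (hMBx p) (abs_nonneg _) hMAv0
    · refine Filter.Eventually.of_forall fun p => ?_
      have t1 := ((tendsto_diffquot dα v p).comp htend_seq_neg).neg
      have t3 : Filter.Tendsto (fun n : ℕ => (1 / seqh n) * (α (p + (-(seqh n • v))) - α p))
          Filter.atTop (nhds (-(pd v α p))) := by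
        refine Filter.Tendsto.congr (fun n => ?_) t1
        show -((α (p + (-seqh n) • v) - α p) / (-seqh n)) = _
        rw [← neg_smul, div_neg, neg_neg, one_div_mul_eq_div]
      exact t3.mul_const (pd vx β p)
  -- Conclude
  have lhs_lim : Filter.Tendsto
      (fun n => ∫ p, pd vx α p * ((β (p + seqh n • v) - β p) / seqh n) ∂μ3)
      Filter.atTop (nhds (- ∫ p, (-(pd v α p)) * pd vx β p ∂μ3)) := by
    refine Filter.Tendsto.congr (fun n => (stepA n).symm) stepC.neg
  have huniq := tendsto_nhds_unique stepB lhs_lim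
  rw [huniq]
  have e4 : (∫ p, (-(pd v α p)) * pd vx β p ∂μ3) = - ∫ p, pd v α p * pd vx β p ∂μ3 := by
    rw [← MeasureTheory.integral_neg]
    refine integral_congr_ae (Filter.Eventually.of_forall fun p => ?_)
    ring
  rw [e4, neg_neg]


/-! ### The weight functions -/

def φg (r : ℝ) (s : ℝ) : ℝ := |s| ^ (r - 2) * s

def ψg (r : ℝ) (s : ℝ) : ℝ := (r - 1) * |s| ^ (r - 2)

def Φg (r : ℝ) (s : ℝ) : ℝ := |s| ^ r / r

lemma cont_abs_rpow {c : ℝ} (hc : 0 ≤ c) : Continuous (fun s : ℝ => |s| ^ c) := by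
  rcases eq_or_lt_of_le hc with hc0 | hc0
  · have : (fun s : ℝ => |s| ^ c) = fun _ => 1 := by
      funext s
      rw [← hc0, Real.rpow_zero]
    rw [this]
    exact continuous_const
  · have h1 : Continuous (fun y : ℝ => y ^ c) := by
      rw [continuous_iff_continuousAt]
      intro y
      exact Real.continuousAt_rpow_const y c (Or.inr hc)
    exact h1.comp continuous_abs

lemma contψ {r : ℝ} (hr : 2 ≤ r) : Continuous (ψg r) :=
  continuous_const.mul (cont_abs_rpow (by linarith))

lemma contφ {r : ℝ} (hr : 2 ≤ r) : Continuous (φg r) :=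
  (cont_abs_rpow (by linarith)).mul continuous_id

lemma ψ_nonneg {r : ℝ} (hr : 2 ≤ r) (s : ℝ) : 0 ≤ ψg r s :=
  mul_nonneg (by linarith) (Real.rpow_nonneg (abs_nonneg s) _)

lemma φ_zero {r : ℝ} : φg r 0 = 0 := by
  rw [φg, mul_zero]

lemma hasDerivAt_φ {r : ℝ} (hr : 2 ≤ r) (s : ℝ) : HasDerivAt (φg r) (ψg r s) s := by
  rcases lt_trichotomy s 0 with hs | hs | hs
  · have hd : HasDerivAt (fun z : ℝ => -((-z) ^ (r - 1))) ((r - 1) * (-s) ^ (r - 2)) s := by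
      have h1 : HasDerivAt (fun z : ℝ => (-z)) (-1) s := (hasDerivAt_id s).neg
      have h2 : HasDerivAt (fun y : ℝ => y ^ (r - 1)) ((r - 1) * (-s) ^ (r - 1 - 1)) (-s) :=
        Real.hasDerivAt_rpow_const (Or.inl (by linarith : -s ≠ 0))
      have h3 := (h2.comp s h1).neg
      refine h3.congr_deriv ?_
      rw [show r - 1 - 1 = r - 2 by ring]
      ring
    have heq : φg r =ᶠ[nhds s] (fun z : ℝ => -((-z) ^ (r - 1))) := by
      filter_upwards [Iio_mem_nhds hs] with z hz
      have hz' : z < 0 := hz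
      show |z| ^ (r - 2) * z = -((-z) ^ (r - 1))
      rw [abs_of_neg hz', show r - 1 = (r - 2) + 1 by ring,
        Real.rpow_add_one (by intro h0; linarith : (-z) ≠ 0)]
      ring
    have : ψg r s = (r - 1) * (-s) ^ (r - 2) := by
      rw [ψg, abs_of_neg hs]
    rw [this]
    exact hd.congr_of_eventuallyEq heq
  · subst hs
    rcases eq_or_lt_of_le hr with hr2 | hr2
    · have hφ : φg r = fun s => s := by
        funext z
        rw [φg, ← hr2, show (2:ℝ) - 2 = 0 by ring, Real.rpow_zero, one_mul]
      have hψ : ψg r 0 = 1 := by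
        rw [ψg, ← hr2, show (2:ℝ) - 2 = 0 by ring, Real.rpow_zero]
        norm_num
      rw [hφ, hψ]
      exact hasDerivAt_id 0
    · have hr2' : 0 < r - 2 := by linarith
      have hψ0 : ψg r 0 = 0 := by
        rw [ψg, abs_zero, Real.zero_rpow hr2'.ne', mul_zero]
      rw [hψ0, hasDerivAt_iff_tendsto_slope]
      have hsl : ∀ z : ℝ, z ≠ 0 → slope (φg r) 0 z = |z| ^ (r - 2) := by
        intro z hz
        rw [slope_def_field, φ_zero, sub_zero, sub_zero, φg, mul_div_assoc, div_self hz,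
          mul_one]
      have hcont : Filter.Tendsto (fun z : ℝ => |z| ^ (r - 2)) (nhds 0) (nhds 0) := by
        have := (cont_abs_rpow (le_of_lt hr2')).tendsto 0
        simpa [Real.zero_rpow hr2'.ne'] using this
      refine Filter.Tendsto.congr' ?_ (hcont.mono_left nhdsWithin_le_nhds)
      filter_upwards [self_mem_nhdsWithin] with z hz
      exact ((hsl z hz)).symm
  · have hd : HasDerivAt (fun z : ℝ => z ^ (r - 1)) ((r - 1) * s ^ (r - 2)) s := by
      have h2 : HasDerivAt (fun y : ℝ => y ^ (r - 1)) ((r - 1) * s ^ (r - 1 - 1)) s :=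
        Real.hasDerivAt_rpow_const (Or.inl (by linarith : s ≠ 0))
      convert h2 using 2
      ring
    have heq : φg r =ᶠ[nhds s] (fun z : ℝ => z ^ (r - 1)) := by
      filter_upwards [Ioi_mem_nhds hs] with z hz
      have hz' : (0:ℝ) < z := hz
      show |z| ^ (r - 2) * z = z ^ (r - 1)
      rw [abs_of_pos hz', show r - 1 = (r - 2) + 1 by ring,
        Real.rpow_add_one (by intro h0; linarith : z ≠ 0)]
    have : ψg r s = (r - 1) * s ^ (r - 2) := by
      rw [ψg, abs_of_pos hs]
    rw [this]
    exact hd.congr_of_eventuallyEq heq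

lemma Φ_zero {r : ℝ} (hr : 2 ≤ r) : Φg r 0 = 0 := by
  rw [Φg, abs_zero, Real.zero_rpow (by linarith : r ≠ 0), zero_div]

lemma hasDerivAt_Φ {r : ℝ} (hr : 2 ≤ r) (s : ℝ) : HasDerivAt (Φg r) (φg r s) s := by
  have hrne : r ≠ 0 := by linarith
  rcases lt_trichotomy s 0 with hs | hs | hs
  · have hd : HasDerivAt (fun z : ℝ => (-z) ^ r / r) (-((-s) ^ (r - 1))) s := by
      have h1 : HasDerivAt (fun z : ℝ => (-z)) (-1) s := (hasDerivAt_id s).neg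
      have h2 : HasDerivAt (fun y : ℝ => y ^ r) (r * (-s) ^ (r - 1)) (-s) :=
        Real.hasDerivAt_rpow_const (Or.inl (by linarith : -s ≠ 0))
      have h3 := (h2.comp s h1).div_const r
      refine h3.congr_deriv ?_
      field_simp
    have heq : Φg r =ᶠ[nhds s] (fun z : ℝ => (-z) ^ r / r) := by
      filter_upwards [Iio_mem_nhds hs] with z hz
      have hz' : z < 0 := hz
      show |z| ^ r / r = (-z) ^ r / r
      rw [abs_of_neg hz']
    have : φg r s = -((-s) ^ (r - 1)) := by
      rw [φg, abs_of_neg hs, show r - 1 = (r - 2) + 1 by ring,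
        Real.rpow_add_one (by linarith : (-s) ≠ 0)]
      ring
    rw [this]
    exact hd.congr_of_eventuallyEq heq
  · subst hs
    rw [hasDerivAt_iff_tendsto_slope, φ_zero]
    have hb : ∀ z : ℝ, z ≠ 0 → |slope (Φg r) 0 z| ≤ |z| ^ (r - 1) / r := by
      intro z hz
      rw [slope_def_field, Φ_zero hr, sub_zero, sub_zero, Φg]
      rw [abs_div, abs_div]
      rw [abs_of_pos (by linarith : (0:ℝ) < r)]
      have h1 : |(|z| ^ r)| = |z| ^ r := abs_of_nonneg (Real.rpow_nonneg (abs_nonneg z) r)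
      rw [h1, div_div]
      rw [div_le_div_iff₀ (by positivity) (by positivity)]
      have h2 : |z| ^ r = |z| ^ (r - 1) * |z| := by
        rw [show r = (r - 1) + 1 by ring, Real.rpow_add_one (abs_ne_zero.mpr hz)]
        ring_nf
      rw [h2]
      ring_nf
      exact le_refl _
    have hg : Filter.Tendsto (fun z : ℝ => |z| ^ (r - 1) / r) (nhds 0) (nhds 0) := by
      have h3 := ((cont_abs_rpow (by linarith : (0:ℝ) ≤ r - 1)).div_const r).tendsto 0
      simpa [Real.zero_rpow (by linarith : r - 1 ≠ 0)] using h3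
    apply squeeze_zero_norm' ?_ (hg.mono_left nhdsWithin_le_nhds)
    filter_upwards [self_mem_nhdsWithin] with z hz
    exact hb z hz
  · have hd : HasDerivAt (fun z : ℝ => z ^ r / r) (s ^ (r - 1)) s := by
      have h2 : HasDerivAt (fun y : ℝ => y ^ r) (r * s ^ (r - 1)) s :=
        Real.hasDerivAt_rpow_const (Or.inl (by linarith : s ≠ 0))
      have h3 := h2.div_const r
      refine h3.congr_deriv ?_
      field_simp
    have heq : Φg r =ᶠ[nhds s] (fun z : ℝ => z ^ r / r) := by
      filter_upwards [Ioi_mem_nhds hs] with z hz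
      have hz' : (0:ℝ) < z := hz
      show |z| ^ r / r = z ^ r / r
      rw [abs_of_pos hz']
    have : φg r s = s ^ (r - 1) := by
      rw [φg, abs_of_pos hs, show r - 1 = (r - 2) + 1 by ring,
        Real.rpow_add_one (by linarith : s ≠ 0)]
    rw [this]
    exact hd.congr_of_eventuallyEq heq

lemma contDiff_φ {r : ℝ} (hr : 2 ≤ r) : ContDiff ℝ 1 (φg r) := by
  rw [contDiff_one_iff_deriv]
  constructor
  · exact fun s => (hasDerivAt_φ hr s).differentiableAt
  · have : deriv (φg r) = ψg r := funext fun s => (hasDerivAt_φ hr s).deriv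
    rw [this]
    exact contψ hr

lemma contDiff_Φ {r : ℝ} (hr : 2 ≤ r) : ContDiff ℝ 1 (Φg r) := by
  rw [contDiff_one_iff_deriv]
  constructor
  · exact fun s => (hasDerivAt_Φ hr s).differentiableAt
  · have : deriv (Φg r) = φg r := funext fun s => (hasDerivAt_Φ hr s).deriv
    rw [this]
    exact contφ hr

lemma abs_φ {r : ℝ} (hr : 2 ≤ r) (s : ℝ) : |φg r s| = |s| ^ (r - 1) := by
  rcases eq_or_ne s 0 with hs | hs
  · subst hs
    rw [φ_zero, abs_zero, Real.zero_rpow (by linarith : r - 1 ≠ 0)]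
  · rw [φg, abs_mul, abs_of_nonneg (Real.rpow_nonneg (abs_nonneg s) _),
      show r - 1 = (r - 2) + 1 by ring, Real.rpow_add_one (abs_ne_zero.mpr hs)]


/-! ### Second derivatives -/

lemma contDiff_pd' {u : R3 → ℝ} (e : R3) (hu : ContDiff ℝ 2 u) : ContDiff ℝ 1 (pd e u) := by
  have h1 : ContDiff ℝ 1 (fderiv ℝ u) :=
    hu.fderiv_right (by norm_num : (1 : WithTop ℕ∞) + 1 ≤ 2)
  exact h1.clm_apply contDiff_const

def CYeq' (F u : R3 → ℝ) : Prop :=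
  ∀ p : R3,
    (pd vx (pd vx u) p + 1)
        * (pd vy (pd vy u) p + pd vt (pd vt u) p + pd vt u p + 1)
      - (pd vy (pd vx u) p) ^ 2 - (pd vt (pd vx u) p) ^ 2 = Real.exp (F p)

lemma pd_comm {u : R3 → ℝ} (hu : ContDiff ℝ 2 u) (e e' p : R3) :
    pd e (pd e' u) p = pd e' (pd e u) p := by
  have hd : Differentiable ℝ (fderiv ℝ u) :=
    (hu.fderiv_right (by norm_num : (1 : WithTop ℕ∞) + 1 ≤ 2)).differentiable one_ne_zero
  have key : ∀ w w' : R3, pd w (pd w' u) p = fderiv ℝ (fderiv ℝ u) p w w' := by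
    intro w w'
    show fderiv ℝ (fun q => (fderiv ℝ u q) w') p w = _
    rw [fderiv_clm_apply (hd p) (differentiableAt_const w')]
    simp
  rw [key, key]
  exact second_derivative_symmetric (fun q => ((hu.differentiable two_ne_zero) q).hasFDerivAt)
    ((hd p).hasFDerivAt) e e'

/-! ### Positivity from the equation -/

lemma X_pos {F u : R3 → ℝ} (hu : ContDiff ℝ 2 u) (huper : Periodic3 u)
    (hsol : CYeq' F u) (p₀ : R3) : 0 < pd vx (pd vx u) p₀ + 1 := by
  have cX : Continuous (fun p => pd vx (pd vx u) p + 1) :=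
    (continuous_pd vx (contDiff_pd' vx hu)).add continuous_const
  have hne : ∀ p : R3, pd vx (pd vx u) p + 1 ≠ 0 := by
    intro p h0
    have h := hsol p
    rw [h0, zero_mul] at h
    have he := Real.exp_pos (F p)
    nlinarith [sq_nonneg (pd vy (pd vx u) p), sq_nonneg (pd vt (pd vx u) p)]
  have hex : ∃ p : R3, 0 < pd vx (pd vx u) p + 1 := by
    by_contra hcon
    push_neg at hcon
    have hux : ContDiff ℝ 1 (pd vx u) := contDiff_pd' vx hu
    have hD : ∀ a : ℝ, HasDerivAt (fun x => pd vx u (x, 0, 0) + x)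
        (pd vx (pd vx u) (a, 0, 0) + 1) a := by
      intro a
      exact (slice_x (hux.differentiable one_ne_zero) 0 0 a).add (hasDerivAt_id a)
    have hcont : Continuous (fun a : ℝ => pd vx (pd vx u) (a, 0, 0) + 1) :=
      cX.comp (continuous_id.prodMk continuous_const)
    have hFTC := intervalIntegral.integral_eq_sub_of_hasDerivAt (a := 0) (b := 1)
      (fun a _ => hD a) (hcont.intervalIntegrable 0 1)
    have hper1 : pd vx u (1, 0, 0) = pd vx u (0, 0, 0) := by
      have h := ((huper.pdP vx) (0, 0, 0)).1
      simpa [vx, Prod.ext_iff] using h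
    have hval : (∫ x in (0:ℝ)..1, (pd vx (pd vx u) (x, 0, 0) + 1)) = 1 := by
      rw [hFTC, hper1]
      ring
    have hle : (∫ x in (0:ℝ)..1, (pd vx (pd vx u) (x, 0, 0) + 1)) ≤ 0 := by
      have h2 : (∫ x in (0:ℝ)..1, (pd vx (pd vx u) (x, 0, 0) + 1))
          ≤ ∫ _x in (0:ℝ)..1, (0:ℝ) := by
        apply intervalIntegral.integral_mono_on zero_le_one
          (hcont.intervalIntegrable 0 1) (intervalIntegrable_const)
        intro x _
        exact hcon (x, 0, 0)
      simpa using h2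
    linarith
  obtain ⟨p₁, hp₁⟩ := hex
  by_contra hcon
  push_neg at hcon
  have hlt : pd vx (pd vx u) p₀ + 1 < 0 := lt_of_le_of_ne hcon (hne p₀)
  have hseg : Continuous fun θ : ℝ => pd vx (pd vx u) (p₀ + θ • (p₁ - p₀)) + 1 :=
    cX.comp (continuous_const.add (continuous_id.smul continuous_const))
  have hIVT := intermediate_value_Icc (zero_le_one (α := ℝ)) hseg.continuousOn
  have hmem : (0:ℝ) ∈ Set.Icc (pd vx (pd vx u) (p₀ + (0:ℝ) • (p₁ - p₀)) + 1)
      (pd vx (pd vx u) (p₀ + (1:ℝ) • (p₁ - p₀)) + 1) := by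
    rw [zero_smul, one_smul, add_zero, add_sub_cancel]
    exact ⟨hlt.le, hp₁.le⟩
  obtain ⟨θ, _, hθ⟩ := hIVT hmem
  exact hne _ hθ

lemma Y_pos {F u : R3 → ℝ} (hu : ContDiff ℝ 2 u) (huper : Periodic3 u)
    (hsol : CYeq' F u) (p : R3) :
    0 < pd vy (pd vy u) p + pd vt (pd vt u) p + pd vt u p + 1 := by
  have hX := X_pos hu huper hsol p
  have h := hsol p
  have he := Real.exp_pos (F p)
  by_contra hcon
  push_neg at hcon
  nlinarith [sq_nonneg (pd vy (pd vx u) p), sq_nonneg (pd vt (pd vx u) p),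
    mul_nonneg hX.le (by linarith :
      (0:ℝ) ≤ -(pd vy (pd vy u) p + pd vt (pd vt u) p + pd vt u p + 1))]

lemma key_quad {F u : R3 → ℝ} (hu : ContDiff ℝ 2 u) (huper : Periodic3 u)
    (hsol : CYeq' F u) (p : R3) :
    2 * (pd vx u p * (pd vy u p * pd vy (pd vx u) p + pd vt u p * pd vt (pd vx u) p))
      ≤ (pd vy (pd vy u) p + pd vt (pd vt u) p + pd vt u p + 1) * (pd vx u p) ^ 2
        + (pd vx (pd vx u) p + 1) * ((pd vy u p) ^ 2 + (pd vt u p) ^ 2) := by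
  have hX := X_pos hu huper hsol p
  have h := hsol p
  have he := Real.exp_pos (F p)
  nlinarith [sq_nonneg (pd vy (pd vx u) p * pd vx u p
      - (pd vx (pd vx u) p + 1) * pd vy u p),
    sq_nonneg (pd vt (pd vx u) p * pd vx u p - (pd vx (pd vx u) p + 1) * pd vt u p),
    mul_nonneg he.le (sq_nonneg (pd vx u p)), hX, sq_nonneg (pd vx u p)]


/-! ### Main assembly -/

lemma pdco {u : R3 → ℝ} (du : Differentiable ℝ u) (G G' : ℝ → ℝ)
    (hG : ∀ s, HasDerivAt G (G' s) s) (e : R3) (p : R3) :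
    pd e (fun q => G (u q)) p = G' (u p) * pd e u p := by
  have h := (hG (u p)).comp_hasFDerivAt p (du p).hasFDerivAt
  have h2 : HasFDerivAt (fun q => G (u q)) (G' (u p) • fderiv ℝ u p) p := h
  show fderiv ℝ (fun q => G (u q)) p e = _
  rw [h2.fderiv]
  show G' (u p) • fderiv ℝ u p e = _
  rw [smul_eq_mul]
  rfl

set_option maxHeartbeats 2000000 in
theorem main_ineq (F u : R3 → ℝ) (hF : Continuous F) (hFper : Periodic3 F)
    (hu : ContDiff ℝ 2 u) (huper : Periodic3 u)
    (hsol : CYeq' F u) (r : ℝ) (hr : 2 ≤ r)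
    (B : ℝ) (hB : ∀ p : R3, |1 + Real.exp (F p)| ≤ B) :
    ∫ p, |u p| ^ (r - 2) * ((pd vx u p) ^ 2 + (pd vy u p) ^ 2 + (pd vt u p) ^ 2) ∂μ3
      ≤ (1 / 4) * (∫ p, |u p| ^ r ∂μ3)
        + (5 * r / 4) * B * (∫ p, |u p| ^ r ∂μ3) ^ ((r - 1) / r) := by
  have hu1 : ContDiff ℝ 1 u := hu.of_le one_le_two
  have du : Differentiable ℝ u := hu1.differentiable one_ne_zero
  have cu : Continuous u := hu1.continuous
  have hCux : ContDiff ℝ 1 (pd vx u) := contDiff_pd' vx hu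
  have hCuy : ContDiff ℝ 1 (pd vy u) := contDiff_pd' vy hu
  have hCut : ContDiff ℝ 1 (pd vt u) := contDiff_pd' vt hu
  have dux : Differentiable ℝ (pd vx u) := hCux.differentiable one_ne_zero
  have duy : Differentiable ℝ (pd vy u) := hCuy.differentiable one_ne_zero
  have dut : Differentiable ℝ (pd vt u) := hCut.differentiable one_ne_zero
  have cux : Continuous (pd vx u) := hCux.continuous
  have cuy : Continuous (pd vy u) := hCuy.continuous
  have cut : Continuous (pd vt u) := hCut.continuous
  have cuxx : Continuous (pd vx (pd vx u)) := continuous_pd vx hCux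
  have cuxy : Continuous (pd vy (pd vx u)) := continuous_pd vy hCux
  have cuxt : Continuous (pd vt (pd vx u)) := continuous_pd vt hCux
  have cuyy : Continuous (pd vy (pd vy u)) := continuous_pd vy hCuy
  have cutt : Continuous (pd vt (pd vt u)) := continuous_pd vt hCut
  have pux : Periodic3 (pd vx u) := huper.pdP vx
  have puy : Periodic3 (pd vy u) := huper.pdP vy
  have put : Periodic3 (pd vt u) := huper.pdP vt
  have hφC : ContDiff ℝ 1 (fun p => φg r (u p)) := (contDiff_φ hr).comp hu1
  have dφu : Differentiable ℝ (fun p => φg r (u p)) := hφC.differentiable one_ne_zero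
  have cφu : Continuous (fun p => φg r (u p)) := hφC.continuous
  have cψu : Continuous (fun p => ψg r (u p)) := (contψ hr).comp cu
  have pφu : Periodic3 (fun p => φg r (u p)) := Periodic3.compP (φg r) huper
  have pdφ : ∀ (e : R3) (p : R3),
      pd e (fun q => φg r (u q)) p = ψg r (u p) * pd e u p :=
    fun e p => pdco du (φg r) (ψg r) (hasDerivAt_φ hr) e p
  have ig : ∀ {f : R3 → ℝ}, Continuous f → Integrable f μ3 := fun h => integrable_μ3 h
  have ccA1 : Continuous (fun p => ψg r (u p) * (pd vx u p * pd vx u p)) :=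
    cψu.mul (cux.mul cux)
  have ccA2 : Continuous (fun p => ψg r (u p) * (pd vy u p * pd vy u p)) :=
    cψu.mul (cuy.mul cuy)
  have ccA3 : Continuous (fun p => ψg r (u p) * (pd vt u p * pd vt u p)) :=
    cψu.mul (cut.mul cut)
  have ccS1 : Continuous (fun p => ψg r (u p) * (pd vx u p * pd vx u p * pd vy (pd vy u) p)) :=
    cψu.mul ((cux.mul cux).mul cuyy)
  have ccT1 : Continuous (fun p => ψg r (u p) * (pd vx u p * pd vx u p * pd vt (pd vt u) p)) :=
    cψu.mul ((cux.mul cux).mul cutt)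
  have ccK : Continuous (fun p => ψg r (u p) * (pd vx u p * pd vx u p * pd vt u p)) :=
    cψu.mul ((cux.mul cux).mul cut)
  have ccS3 : Continuous (fun p => ψg r (u p) * (pd vy u p * pd vy u p * pd vx (pd vx u) p)) :=
    cψu.mul ((cuy.mul cuy).mul cuxx)
  have ccT3 : Continuous (fun p => ψg r (u p) * (pd vt u p * pd vt u p * pd vx (pd vx u) p)) :=
    cψu.mul ((cut.mul cut).mul cuxx)
  have ccS2 : Continuous (fun p => ψg r (u p) * (pd vx u p * pd vy u p * pd vy (pd vx u) p)) :=
    cψu.mul ((cux.mul cuy).mul cuxy)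
  have ccT2 : Continuous (fun p => ψg r (u p) * (pd vx u p * pd vt u p * pd vt (pd vx u) p)) :=
    cψu.mul ((cux.mul cut).mul cuxt)
  have ccP : Continuous (fun p => φg r (u p) * (pd vx (pd vx u) p * pd vy (pd vy u) p)) :=
    cφu.mul (cuxx.mul cuyy)
  have ccPt : Continuous (fun p => φg r (u p) * (pd vx (pd vx u) p * pd vt (pd vt u) p)) :=
    cφu.mul (cuxx.mul cutt)
  have ccW : Continuous (fun p => φg r (u p) * (pd vx (pd vx u) p * pd vt u p)) :=
    cφu.mul (cuxx.mul cut)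
  have ccR : Continuous (fun p => φg r (u p) * (pd vy (pd vx u) p * pd vy (pd vx u) p)) :=
    cφu.mul (cuxy.mul cuxy)
  have ccRt : Continuous (fun p => φg r (u p) * (pd vt (pd vx u) p * pd vt (pd vx u) p)) :=
    cφu.mul (cuxt.mul cuxt)
  have ccB1 : Continuous (fun p => φg r (u p) * pd vx (pd vx u) p) := cφu.mul cuxx
  have ccB2 : Continuous (fun p => φg r (u p) * pd vy (pd vy u) p) := cφu.mul cuyy
  have ccB3 : Continuous (fun p => φg r (u p) * pd vt (pd vt u) p) := cφu.mul cutt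
  have ccC0 : Continuous (fun p => φg r (u p) * pd vt u p) := cφu.mul cut
  have ccG : Continuous (fun p => φg r (u p) * (1 - Real.exp (F p))) :=
    cφu.mul (continuous_const.sub (Real.continuous_exp.comp hF))
  -- ## The integration-by-parts identities
  -- (1) x-direction
  have hI1x : (∫ p, ψg r (u p) * (pd vx u p * pd vx u p) ∂μ3)
      + (∫ p, φg r (u p) * pd vx (pd vx u) p ∂μ3) = 0 := by
    have h0 := integral_pd_x_zero (hφC.mul hCux) (Periodic3.mulP pφu pux)
    have hpt : ∀ p, pd vx (fun q => φg r (u q) * pd vx u q) p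
        = ψg r (u p) * (pd vx u p * pd vx u p) + φg r (u p) * pd vx (pd vx u) p := by
      intro p
      rw [pd_mul_pt (dφu p) (dux p) vx, pdφ vx p]
      ring
    rw [integral_congr_ae (Filter.Eventually.of_forall hpt),
      integral_add (ig (cψu.fun_mul (cux.fun_mul cux))) (ig (cφu.fun_mul cuxx))] at h0
    exact h0
  -- (2) y-direction
  have hI1y : (∫ p, ψg r (u p) * (pd vy u p * pd vy u p) ∂μ3)
      + (∫ p, φg r (u p) * pd vy (pd vy u) p ∂μ3) = 0 := by
    have h0 := integral_pd_y_zero (hφC.mul hCuy) (Periodic3.mulP pφu puy)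
    have hpt : ∀ p, pd vy (fun q => φg r (u q) * pd vy u q) p
        = ψg r (u p) * (pd vy u p * pd vy u p) + φg r (u p) * pd vy (pd vy u) p := by
      intro p
      rw [pd_mul_pt (dφu p) (duy p) vy, pdφ vy p]
      ring
    rw [integral_congr_ae (Filter.Eventually.of_forall hpt),
      integral_add (ig (cψu.fun_mul (cuy.fun_mul cuy))) (ig (cφu.fun_mul cuyy))] at h0
    exact h0
  -- (3) t-direction
  have hI1t : (∫ p, ψg r (u p) * (pd vt u p * pd vt u p) ∂μ3)
      + (∫ p, φg r (u p) * pd vt (pd vt u) p ∂μ3) = 0 := by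
    have h0 := integral_pd_t_zero (hφC.mul hCut) (Periodic3.mulP pφu put)
    have hpt : ∀ p, pd vt (fun q => φg r (u q) * pd vt u q) p
        = ψg r (u p) * (pd vt u p * pd vt u p) + φg r (u p) * pd vt (pd vt u) p := by
      intro p
      rw [pd_mul_pt (dφu p) (dut p) vt, pdφ vt p]
      ring
    rw [integral_congr_ae (Filter.Eventually.of_forall hpt),
      integral_add (ig (cψu.fun_mul (cut.fun_mul cut))) (ig (cφu.fun_mul cutt))] at h0
    exact h0
  -- (4) drift term vanishes
  have hI2 : (∫ p, φg r (u p) * pd vt u p ∂μ3) = 0 := by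
    have h0 := integral_pd_t_zero (V := fun p => Φg r (u p)) ((contDiff_Φ hr).comp hu1)
      (Periodic3.compP (Φg r) huper)
    have hpt : ∀ p, pd vt (fun q => Φg r (u q)) p = φg r (u p) * pd vt u p :=
      fun p => pdco du (Φg r) (φg r) (hasDerivAt_Φ hr) vt p
    rw [integral_congr_ae (Filter.Eventually.of_forall hpt)] at h0
    exact h0
  -- (5) K + 2J = 0
  have hI3 : (∫ p, ψg r (u p) * (pd vx u p * pd vx u p * pd vt u p) ∂μ3)
      + 2 * (∫ p, φg r (u p) * (pd vx u p * pd vt (pd vx u) p) ∂μ3) = 0 := by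
    have h0 := integral_pd_t_zero (hφC.mul (hCux.mul hCux))
      (Periodic3.mulP pφu (Periodic3.mulP pux pux))
    have hpt : ∀ p, pd vt (fun q => φg r (u q) * (pd vx u q * pd vx u q)) p
        = ψg r (u p) * (pd vx u p * pd vx u p * pd vt u p)
          + 2 * (φg r (u p) * (pd vx u p * pd vt (pd vx u) p)) := by
      intro p
      rw [pd_mul_pt (dφu p) ((dux p).fun_mul (dux p)) vt, pdφ vt p,
        pd_mul_pt (dux p) (dux p) vt]
      ring
    rw [integral_congr_ae (Filter.Eventually.of_forall hpt),
      integral_add (ig (cψu.fun_mul ((cux.fun_mul cux).fun_mul cut)))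
        ((ig (cφu.fun_mul (cux.fun_mul cuxt))).const_mul 2),
      MeasureTheory.integral_const_mul] at h0
    exact h0
  -- (6) K + W + J = 0
  have hI4 : (∫ p, ψg r (u p) * (pd vx u p * pd vx u p * pd vt u p) ∂μ3)
      + (∫ p, φg r (u p) * (pd vx (pd vx u) p * pd vt u p) ∂μ3)
      + (∫ p, φg r (u p) * (pd vx u p * pd vt (pd vx u) p) ∂μ3) = 0 := by
    have h0 := integral_pd_x_zero ((hφC.mul hCux).mul hCut)
      (Periodic3.mulP (Periodic3.mulP pφu pux) put)
    have hpt : ∀ p, pd vx (fun q => φg r (u q) * pd vx u q * pd vt u q) p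
        = ψg r (u p) * (pd vx u p * pd vx u p * pd vt u p)
          + φg r (u p) * (pd vx (pd vx u) p * pd vt u p)
          + φg r (u p) * (pd vx u p * pd vt (pd vx u) p) := by
      intro p
      rw [pd_mul_pt ((dφu p).fun_mul (dux p)) (dut p) vx,
        pd_mul_pt (dφu p) (dux p) vx, pdφ vx p, pd_comm hu vx vt p]
      ring
    rw [integral_congr_ae (Filter.Eventually.of_forall hpt),
      integral_add (ig ((cψu.fun_mul ((cux.fun_mul cux).fun_mul cut)).fun_add
        (cφu.fun_mul (cuxx.fun_mul cut)))) (ig (cφu.fun_mul (cux.fun_mul cuxt))),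
      integral_add (ig (cψu.fun_mul ((cux.fun_mul cux).fun_mul cut)))
        (ig (cφu.fun_mul (cuxx.fun_mul cut)))] at h0
    exact h0
  -- (7) E1 : swap in (x,y)
  have hE1 : (∫ p, ψg r (u p) * (pd vx u p * pd vx u p * pd vy (pd vy u) p) ∂μ3)
      + (∫ p, φg r (u p) * (pd vx (pd vx u) p * pd vy (pd vy u) p) ∂μ3)
      = (∫ p, ψg r (u p) * (pd vx u p * pd vy u p * pd vy (pd vx u) p) ∂μ3)
        + (∫ p, φg r (u p) * (pd vy (pd vx u) p * pd vy (pd vx u) p) ∂μ3) := by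
    have hsw := swap_x vy (hφC.mul hCux) hCuy (Periodic3.mulP pφu pux) puy
      (fun g hg hp s => shift_y hg hp s)
    have hl : ∀ p, pd vx (fun q => φg r (u q) * pd vx u q) p * pd vy (pd vy u) p
        = ψg r (u p) * (pd vx u p * pd vx u p * pd vy (pd vy u) p)
          + φg r (u p) * (pd vx (pd vx u) p * pd vy (pd vy u) p) := by
      intro p
      rw [pd_mul_pt (dφu p) (dux p) vx, pdφ vx p]
      ring
    have hrr : ∀ p, pd vy (fun q => φg r (u q) * pd vx u q) p * pd vx (pd vy u) p
        = ψg r (u p) * (pd vx u p * pd vy u p * pd vy (pd vx u) p)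
          + φg r (u p) * (pd vy (pd vx u) p * pd vy (pd vx u) p) := by
      intro p
      rw [pd_mul_pt (dφu p) (dux p) vy, pdφ vy p, pd_comm hu vx vy p]
      ring
    rw [integral_congr_ae (Filter.Eventually.of_forall hl),
      integral_congr_ae (Filter.Eventually.of_forall hrr),
      integral_add (ig (cψu.fun_mul ((cux.fun_mul cux).fun_mul cuyy))) (ig (cφu.fun_mul (cuxx.fun_mul cuyy))),
      integral_add (ig (cψu.fun_mul ((cux.fun_mul cuy).fun_mul cuxy))) (ig (cφu.fun_mul (cuxy.fun_mul cuxy)))]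
      at hsw
    exact hsw
  -- (8) E2 : swap in (x,y), reversed
  have hE2 : (∫ p, ψg r (u p) * (pd vx u p * pd vy u p * pd vy (pd vx u) p) ∂μ3)
      + (∫ p, φg r (u p) * (pd vy (pd vx u) p * pd vy (pd vx u) p) ∂μ3)
      = (∫ p, ψg r (u p) * (pd vy u p * pd vy u p * pd vx (pd vx u) p) ∂μ3)
        + (∫ p, φg r (u p) * (pd vx (pd vx u) p * pd vy (pd vy u) p) ∂μ3) := by
    have hsw := swap_x vy (hφC.mul hCuy) hCux (Periodic3.mulP pφu puy) pux
      (fun g hg hp s => shift_y hg hp s)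
    have hl : ∀ p, pd vx (fun q => φg r (u q) * pd vy u q) p * pd vy (pd vx u) p
        = ψg r (u p) * (pd vx u p * pd vy u p * pd vy (pd vx u) p)
          + φg r (u p) * (pd vy (pd vx u) p * pd vy (pd vx u) p) := by
      intro p
      rw [pd_mul_pt (dφu p) (duy p) vx, pdφ vx p, pd_comm hu vx vy p]
      ring
    have hrr : ∀ p, pd vy (fun q => φg r (u q) * pd vy u q) p * pd vx (pd vx u) p
        = ψg r (u p) * (pd vy u p * pd vy u p * pd vx (pd vx u) p)
          + φg r (u p) * (pd vx (pd vx u) p * pd vy (pd vy u) p) := by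
      intro p
      rw [pd_mul_pt (dφu p) (duy p) vy, pdφ vy p]
      ring
    rw [integral_congr_ae (Filter.Eventually.of_forall hl),
      integral_congr_ae (Filter.Eventually.of_forall hrr),
      integral_add (ig (cψu.fun_mul ((cux.fun_mul cuy).fun_mul cuxy))) (ig (cφu.fun_mul (cuxy.fun_mul cuxy))),
      integral_add (ig (cψu.fun_mul ((cuy.fun_mul cuy).fun_mul cuxx))) (ig (cφu.fun_mul (cuxx.fun_mul cuyy)))]
      at hsw
    exact hsw
  -- (9) E1t : swap in (x,t)
  have hE1t : (∫ p, ψg r (u p) * (pd vx u p * pd vx u p * pd vt (pd vt u) p) ∂μ3)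
      + (∫ p, φg r (u p) * (pd vx (pd vx u) p * pd vt (pd vt u) p) ∂μ3)
      = (∫ p, ψg r (u p) * (pd vx u p * pd vt u p * pd vt (pd vx u) p) ∂μ3)
        + (∫ p, φg r (u p) * (pd vt (pd vx u) p * pd vt (pd vx u) p) ∂μ3) := by
    have hsw := swap_x vt (hφC.mul hCux) hCut (Periodic3.mulP pφu pux) put
      (fun g hg hp s => shift_t hg hp s)
    have hl : ∀ p, pd vx (fun q => φg r (u q) * pd vx u q) p * pd vt (pd vt u) p
        = ψg r (u p) * (pd vx u p * pd vx u p * pd vt (pd vt u) p)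
          + φg r (u p) * (pd vx (pd vx u) p * pd vt (pd vt u) p) := by
      intro p
      rw [pd_mul_pt (dφu p) (dux p) vx, pdφ vx p]
      ring
    have hrr : ∀ p, pd vt (fun q => φg r (u q) * pd vx u q) p * pd vx (pd vt u) p
        = ψg r (u p) * (pd vx u p * pd vt u p * pd vt (pd vx u) p)
          + φg r (u p) * (pd vt (pd vx u) p * pd vt (pd vx u) p) := by
      intro p
      rw [pd_mul_pt (dφu p) (dux p) vt, pdφ vt p, pd_comm hu vx vt p]
      ring
    rw [integral_congr_ae (Filter.Eventually.of_forall hl),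
      integral_congr_ae (Filter.Eventually.of_forall hrr),
      integral_add (ig (cψu.fun_mul ((cux.fun_mul cux).fun_mul cutt))) (ig (cφu.fun_mul (cuxx.fun_mul cutt))),
      integral_add (ig (cψu.fun_mul ((cux.fun_mul cut).fun_mul cuxt))) (ig (cφu.fun_mul (cuxt.fun_mul cuxt)))]
      at hsw
    exact hsw
  -- (10) E2t : swap in (x,t), reversed
  have hE2t : (∫ p, ψg r (u p) * (pd vx u p * pd vt u p * pd vt (pd vx u) p) ∂μ3)
      + (∫ p, φg r (u p) * (pd vt (pd vx u) p * pd vt (pd vx u) p) ∂μ3)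
      = (∫ p, ψg r (u p) * (pd vt u p * pd vt u p * pd vx (pd vx u) p) ∂μ3)
        + (∫ p, φg r (u p) * (pd vx (pd vx u) p * pd vt (pd vt u) p) ∂μ3) := by
    have hsw := swap_x vt (hφC.mul hCut) hCux (Periodic3.mulP pφu put) pux
      (fun g hg hp s => shift_t hg hp s)
    have hl : ∀ p, pd vx (fun q => φg r (u q) * pd vt u q) p * pd vt (pd vx u) p
        = ψg r (u p) * (pd vx u p * pd vt u p * pd vt (pd vx u) p)
          + φg r (u p) * (pd vt (pd vx u) p * pd vt (pd vx u) p) := by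
      intro p
      rw [pd_mul_pt (dφu p) (dut p) vx, pdφ vx p, pd_comm hu vx vt p]
      ring
    have hrr : ∀ p, pd vt (fun q => φg r (u q) * pd vt u q) p * pd vx (pd vx u) p
        = ψg r (u p) * (pd vt u p * pd vt u p * pd vx (pd vx u) p)
          + φg r (u p) * (pd vx (pd vx u) p * pd vt (pd vt u) p) := by
      intro p
      rw [pd_mul_pt (dφu p) (dut p) vt, pdφ vt p]
      ring
    rw [integral_congr_ae (Filter.Eventually.of_forall hl),
      integral_congr_ae (Filter.Eventually.of_forall hrr),
      integral_add (ig (cψu.fun_mul ((cux.fun_mul cut).fun_mul cuxt))) (ig (cφu.fun_mul (cuxt.fun_mul cuxt))),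
      integral_add (ig (cψu.fun_mul ((cut.fun_mul cut).fun_mul cuxx))) (ig (cφu.fun_mul (cuxx.fun_mul cutt)))]
      at hsw
    exact hsw
  -- integrability shortcuts for the atoms
  have icA1 : Integrable (fun p => ψg r (u p) * (pd vx u p * pd vx u p)) μ3 :=
    ig (cψu.mul (cux.mul cux))
  have icA2 : Integrable (fun p => ψg r (u p) * (pd vy u p * pd vy u p)) μ3 :=
    ig (cψu.mul (cuy.mul cuy))
  have icA3 : Integrable (fun p => ψg r (u p) * (pd vt u p * pd vt u p)) μ3 :=
    ig (cψu.mul (cut.mul cut))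
  have icS1 : Integrable (fun p => ψg r (u p) * (pd vx u p * pd vx u p * pd vy (pd vy u) p)) μ3 :=
    ig (cψu.mul ((cux.mul cux).mul cuyy))
  have icT1 : Integrable (fun p => ψg r (u p) * (pd vx u p * pd vx u p * pd vt (pd vt u) p)) μ3 :=
    ig (cψu.mul ((cux.mul cux).mul cutt))
  have icK : Integrable (fun p => ψg r (u p) * (pd vx u p * pd vx u p * pd vt u p)) μ3 :=
    ig (cψu.mul ((cux.mul cux).mul cut))
  have icS3 : Integrable (fun p => ψg r (u p) * (pd vy u p * pd vy u p * pd vx (pd vx u) p)) μ3 :=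
    ig (cψu.mul ((cuy.mul cuy).mul cuxx))
  have icT3 : Integrable (fun p => ψg r (u p) * (pd vt u p * pd vt u p * pd vx (pd vx u) p)) μ3 :=
    ig (cψu.mul ((cut.mul cut).mul cuxx))
  have icS2 : Integrable (fun p => ψg r (u p) * (pd vx u p * pd vy u p * pd vy (pd vx u) p)) μ3 :=
    ig (cψu.mul ((cux.mul cuy).mul cuxy))
  have icT2 : Integrable (fun p => ψg r (u p) * (pd vx u p * pd vt u p * pd vt (pd vx u) p)) μ3 :=
    ig (cψu.mul ((cux.mul cut).mul cuxt))
  have icP : Integrable (fun p => φg r (u p) * (pd vx (pd vx u) p * pd vy (pd vy u) p)) μ3 :=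
    ig (cφu.mul (cuxx.mul cuyy))
  have icPt : Integrable (fun p => φg r (u p) * (pd vx (pd vx u) p * pd vt (pd vt u) p)) μ3 :=
    ig (cφu.mul (cuxx.mul cutt))
  have icW : Integrable (fun p => φg r (u p) * (pd vx (pd vx u) p * pd vt u p)) μ3 :=
    ig (cφu.mul (cuxx.mul cut))
  have icR : Integrable (fun p => φg r (u p) * (pd vy (pd vx u) p * pd vy (pd vx u) p)) μ3 :=
    ig (cφu.mul (cuxy.mul cuxy))
  have icRt : Integrable (fun p => φg r (u p) * (pd vt (pd vx u) p * pd vt (pd vx u) p)) μ3 :=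
    ig (cφu.mul (cuxt.mul cuxt))
  have icB1 : Integrable (fun p => φg r (u p) * pd vx (pd vx u) p) μ3 := ig (cφu.mul cuxx)
  have icB2 : Integrable (fun p => φg r (u p) * pd vy (pd vy u) p) μ3 := ig (cφu.mul cuyy)
  have icB3 : Integrable (fun p => φg r (u p) * pd vt (pd vt u) p) μ3 := ig (cφu.mul cutt)
  have icC0 : Integrable (fun p => φg r (u p) * pd vt u p) μ3 := ig (cφu.mul cut)
  have icG : Integrable (fun p => φg r (u p) * (1 - Real.exp (F p))) μ3 :=
    ig (cφu.mul (continuous_const.sub (Real.continuous_exp.comp hF)))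
  -- (11) the equation, multiplied by φ(u) and integrated
  have hPDE : (∫ p, φg r (u p) * (pd vx (pd vx u) p * pd vy (pd vy u) p) ∂μ3)
      + (∫ p, φg r (u p) * (pd vx (pd vx u) p * pd vt (pd vt u) p) ∂μ3)
      + (∫ p, φg r (u p) * (pd vx (pd vx u) p * pd vt u p) ∂μ3)
      - (∫ p, φg r (u p) * (pd vy (pd vx u) p * pd vy (pd vx u) p) ∂μ3)
      - (∫ p, φg r (u p) * (pd vt (pd vx u) p * pd vt (pd vx u) p) ∂μ3)
      = -(∫ p, φg r (u p) * (1 - Real.exp (F p)) ∂μ3)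
        - (∫ p, φg r (u p) * pd vx (pd vx u) p ∂μ3)
        - (∫ p, φg r (u p) * pd vy (pd vy u) p ∂μ3)
        - (∫ p, φg r (u p) * pd vt (pd vt u) p ∂μ3)
        - (∫ p, φg r (u p) * pd vt u p ∂μ3) := by
    have hpt : ∀ p, φg r (u p) * (pd vx (pd vx u) p * pd vy (pd vy u) p)
        + φg r (u p) * (pd vx (pd vx u) p * pd vt (pd vt u) p)
        + φg r (u p) * (pd vx (pd vx u) p * pd vt u p)
        - φg r (u p) * (pd vy (pd vx u) p * pd vy (pd vx u) p)
        - φg r (u p) * (pd vt (pd vx u) p * pd vt (pd vx u) p)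
        = -(φg r (u p) * (1 - Real.exp (F p)))
          - φg r (u p) * pd vx (pd vx u) p - φg r (u p) * pd vy (pd vy u) p
          - φg r (u p) * pd vt (pd vt u) p - φg r (u p) * pd vt u p := by
      intro p
      have h := hsol p
      linear_combination (φg r (u p)) * h
    have h1 : (∫ p, (φg r (u p) * (pd vx (pd vx u) p * pd vy (pd vy u) p)
        + φg r (u p) * (pd vx (pd vx u) p * pd vt (pd vt u) p)
        + φg r (u p) * (pd vx (pd vx u) p * pd vt u p)
        - φg r (u p) * (pd vy (pd vx u) p * pd vy (pd vx u) p)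
        - φg r (u p) * (pd vt (pd vx u) p * pd vt (pd vx u) p)) ∂μ3)
        = ∫ p, (-(φg r (u p) * (1 - Real.exp (F p)))
          - φg r (u p) * pd vx (pd vx u) p - φg r (u p) * pd vy (pd vy u) p
          - φg r (u p) * pd vt (pd vt u) p - φg r (u p) * pd vt u p) ∂μ3 :=
      integral_congr_ae (Filter.Eventually.of_forall hpt)
    rw [integral_sub (ig (((ccP.fun_add ccPt).fun_add ccW).fun_sub ccR)) (ig ccRt),
      integral_sub (ig ((ccP.fun_add ccPt).fun_add ccW)) (ig ccR),
      integral_add (ig (ccP.fun_add ccPt)) (ig ccW), integral_add (ig ccP) (ig ccPt),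
      integral_sub (ig (((ccG.fun_neg.fun_sub ccB1).fun_sub ccB2).fun_sub ccB3)) (ig ccC0),
      integral_sub (ig ((ccG.fun_neg.fun_sub ccB1).fun_sub ccB2)) (ig ccB3),
      integral_sub (ig (ccG.fun_neg.fun_sub ccB1)) (ig ccB2),
      integral_sub (ig ccG.fun_neg) (ig ccB1), integral_neg] at h1
    exact h1
  -- (12) the matrix positivity inequality, integrated
  have hM : 2 * (∫ p, ψg r (u p) * (pd vx u p * pd vy u p * pd vy (pd vx u) p) ∂μ3)
      + 2 * (∫ p, ψg r (u p) * (pd vx u p * pd vt u p * pd vt (pd vx u) p) ∂μ3)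
      ≤ (∫ p, ψg r (u p) * (pd vx u p * pd vx u p) ∂μ3)
        + (∫ p, ψg r (u p) * (pd vy u p * pd vy u p) ∂μ3)
        + (∫ p, ψg r (u p) * (pd vt u p * pd vt u p) ∂μ3)
        + (∫ p, ψg r (u p) * (pd vx u p * pd vx u p * pd vy (pd vy u) p) ∂μ3)
        + (∫ p, ψg r (u p) * (pd vx u p * pd vx u p * pd vt (pd vt u) p) ∂μ3)
        + (∫ p, ψg r (u p) * (pd vx u p * pd vx u p * pd vt u p) ∂μ3)
        + (∫ p, ψg r (u p) * (pd vy u p * pd vy u p * pd vx (pd vx u) p) ∂μ3)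
        + (∫ p, ψg r (u p) * (pd vt u p * pd vt u p * pd vx (pd vx u) p) ∂μ3) := by
    have key : (∫ p, (2 * (ψg r (u p) * (pd vx u p * pd vy u p * pd vy (pd vx u) p))
        + 2 * (ψg r (u p) * (pd vx u p * pd vt u p * pd vt (pd vx u) p))) ∂μ3)
        ≤ ∫ p, (ψg r (u p) * (pd vx u p * pd vx u p)
          + ψg r (u p) * (pd vy u p * pd vy u p)
          + ψg r (u p) * (pd vt u p * pd vt u p)
          + ψg r (u p) * (pd vx u p * pd vx u p * pd vy (pd vy u) p)
          + ψg r (u p) * (pd vx u p * pd vx u p * pd vt (pd vt u) p)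
          + ψg r (u p) * (pd vx u p * pd vx u p * pd vt u p)
          + ψg r (u p) * (pd vy u p * pd vy u p * pd vx (pd vx u) p)
          + ψg r (u p) * (pd vt u p * pd vt u p * pd vx (pd vx u) p)) ∂μ3 := by
      apply integral_mono (ig ((continuous_const.mul ccS2).add (continuous_const.mul ccT2)))
        (ig (((((((ccA1.add ccA2).add ccA3).add ccS1).add ccT1).add ccK).add ccS3).add ccT3))
      intro p
      have hq := mul_le_mul_of_nonneg_left (key_quad hu huper hsol p) (ψ_nonneg hr (u p))
      calc 2 * (ψg r (u p) * (pd vx u p * pd vy u p * pd vy (pd vx u) p))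
          + 2 * (ψg r (u p) * (pd vx u p * pd vt u p * pd vt (pd vx u) p))
          = ψg r (u p) * (2 * (pd vx u p * (pd vy u p * pd vy (pd vx u) p
            + pd vt u p * pd vt (pd vx u) p))) := by ring
        _ ≤ ψg r (u p) * ((pd vy (pd vy u) p + pd vt (pd vt u) p + pd vt u p + 1)
            * (pd vx u p) ^ 2
            + (pd vx (pd vx u) p + 1) * ((pd vy u p) ^ 2 + (pd vt u p) ^ 2)) := hq
        _ = ψg r (u p) * (pd vx u p * pd vx u p)
          + ψg r (u p) * (pd vy u p * pd vy u p)
          + ψg r (u p) * (pd vt u p * pd vt u p)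
          + ψg r (u p) * (pd vx u p * pd vx u p * pd vy (pd vy u) p)
          + ψg r (u p) * (pd vx u p * pd vx u p * pd vt (pd vt u) p)
          + ψg r (u p) * (pd vx u p * pd vx u p * pd vt u p)
          + ψg r (u p) * (pd vy u p * pd vy u p * pd vx (pd vx u) p)
          + ψg r (u p) * (pd vt u p * pd vt u p * pd vx (pd vx u) p) := by ring
    rw [integral_add (ig (continuous_const.fun_mul ccS2)) (ig (continuous_const.fun_mul ccT2)),
      MeasureTheory.integral_const_mul, MeasureTheory.integral_const_mul,
      integral_add (ig ((((((ccA1.fun_add ccA2).fun_add ccA3).fun_add ccS1).fun_add ccT1).fun_add ccK).fun_add ccS3))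
        (ig ccT3),
      integral_add (ig (((((ccA1.fun_add ccA2).fun_add ccA3).fun_add ccS1).fun_add ccT1).fun_add ccK)) (ig ccS3),
      integral_add (ig ((((ccA1.fun_add ccA2).fun_add ccA3).fun_add ccS1).fun_add ccT1)) (ig ccK),
      integral_add (ig (((ccA1.fun_add ccA2).fun_add ccA3).fun_add ccS1)) (ig ccT1),
      integral_add (ig ((ccA1.fun_add ccA2).fun_add ccA3)) (ig ccS1),
      integral_add (ig (ccA1.fun_add ccA2)) (ig ccA3),
      integral_add (ig ccA1) (ig ccA2)] at key
    exact key
  -- (13) relation with the target integrand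
  have hTA : (r - 1) * (∫ p, |u p| ^ (r - 2)
        * ((pd vx u p) ^ 2 + (pd vy u p) ^ 2 + (pd vt u p) ^ 2) ∂μ3)
      = (∫ p, ψg r (u p) * (pd vx u p * pd vx u p) ∂μ3)
        + (∫ p, ψg r (u p) * (pd vy u p * pd vy u p) ∂μ3)
        + (∫ p, ψg r (u p) * (pd vt u p * pd vt u p) ∂μ3) := by
    rw [← MeasureTheory.integral_const_mul, ← integral_add (ig ccA1) (ig ccA2),
      ← integral_add (ig (ccA1.fun_add ccA2)) (ig ccA3)]
    refine integral_congr_ae (Filter.Eventually.of_forall fun p => ?_)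
    show (r - 1) * (|u p| ^ (r - 2) * ((pd vx u p) ^ 2 + (pd vy u p) ^ 2 + (pd vt u p) ^ 2)) = _
    simp only [ψg]
    ring
  have hT0 : 0 ≤ ∫ p, |u p| ^ (r - 2)
      * ((pd vx u p) ^ 2 + (pd vy u p) ^ 2 + (pd vt u p) ^ 2) ∂μ3 := by
    apply integral_nonneg
    intro p
    have h1 : (0:ℝ) ≤ |u p| ^ (r - 2) := Real.rpow_nonneg (abs_nonneg _) _
    positivity
  have hN0 : 0 ≤ ∫ p, |u p| ^ r ∂μ3 :=
    integral_nonneg fun p => Real.rpow_nonneg (abs_nonneg _) _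
  have hB0 : 0 ≤ B := le_trans (abs_nonneg _) (hB (0, 0, 0))
  -- (14) the Hölder bound on G
  have hGb : (∫ p, φg r (u p) * (1 - Real.exp (F p)) ∂μ3)
      ≤ B * (∫ p, |u p| ^ r ∂μ3) ^ ((r - 1) / r) := by
    have hr1 : (0:ℝ) < r - 1 := by linarith
    have h1 : (∫ p, φg r (u p) * (1 - Real.exp (F p)) ∂μ3)
        ≤ ∫ p, |u p| ^ (r - 1) * B ∂μ3 := by
      apply integral_mono icG
        (ig (((cont_abs_rpow (by linarith : (0:ℝ) ≤ r - 1)).comp cu).mul continuous_const))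
      intro p
      calc φg r (u p) * (1 - Real.exp (F p))
          ≤ |φg r (u p) * (1 - Real.exp (F p))| := le_abs_self _
        _ = |φg r (u p)| * |1 - Real.exp (F p)| := abs_mul _ _
        _ ≤ |u p| ^ (r - 1) * B := by
            rw [abs_φ hr]
            apply mul_le_mul_of_nonneg_left ?_ (Real.rpow_nonneg (abs_nonneg _) _)
            have he := Real.exp_pos (F p)
            have h2 := hB p
            rw [abs_of_pos (by linarith : (0:ℝ) < 1 + Real.exp (F p))] at h2
            exact abs_le.mpr ⟨by linarith, by linarith⟩
    have h2 : (∫ p, |u p| ^ (r - 1) * B ∂μ3) = B * ∫ p, |u p| ^ (r - 1) ∂μ3 := by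
      rw [MeasureTheory.integral_mul_const]
      ring
    have h3 : (∫ p, |u p| ^ (r - 1) ∂μ3) ≤ (∫ p, |u p| ^ r ∂μ3) ^ ((r - 1) / r) := by
      have hrne : r ≠ 0 := by linarith
      have hr1ne : r - 1 ≠ 0 := hr1.ne'
      have hpq : Real.HolderConjugate (r / (r - 1)) r := by
        refine Real.holderConjugate_iff.mpr ⟨?_, ?_⟩
        · rw [one_lt_div hr1]
          linarith
        · field_simp
          ring
      obtain ⟨Mu, hMu0, hMu⟩ := bound_of_periodic cu huper
      have hmem1 : MemLp (fun p => |u p| ^ (r - 1)) (ENNReal.ofReal (r / (r - 1))) μ3 :=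
        MemLp.of_bound (((cont_abs_rpow (by linarith : (0:ℝ) ≤ r - 1)).comp
          cu).aestronglyMeasurable) (Mu ^ (r - 1))
          (Filter.Eventually.of_forall fun p => by
            rw [Real.norm_eq_abs, abs_of_nonneg (Real.rpow_nonneg (abs_nonneg _) _)]
            exact Real.rpow_le_rpow (abs_nonneg _) (hMu p) (by linarith))
      have hmem2 : MemLp (fun _ : R3 => (1:ℝ)) (ENNReal.ofReal r) μ3 := memLp_const 1
      have hH := MeasureTheory.integral_mul_le_Lp_mul_Lq_of_nonneg hpq
        (Filter.Eventually.of_forall fun p => Real.rpow_nonneg (abs_nonneg _) _)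
        (Filter.Eventually.of_forall fun _ : R3 => zero_le_one) hmem1 hmem2
      simp only [mul_one, Real.one_rpow] at hH
      have hone : (∫ _ : R3, (1:ℝ) ∂μ3) = 1 := by simp
      rw [hone, Real.one_rpow, mul_one] at hH
      have hcomp : ∀ p : R3, (|u p| ^ (r - 1)) ^ (r / (r - 1)) = |u p| ^ r := by
        intro p
        rw [← Real.rpow_mul (abs_nonneg _)]
        congr 1
        field_simp
      have h5 : (∫ p, (|u p| ^ (r - 1)) ^ (r / (r - 1)) ∂μ3) = ∫ p, |u p| ^ r ∂μ3 :=
        integral_congr_ae (Filter.Eventually.of_forall hcomp)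
      rw [h5, one_div_div] at hH
      exact hH
    calc (∫ p, φg r (u p) * (1 - Real.exp (F p)) ∂μ3) ≤ ∫ p, |u p| ^ (r - 1) * B ∂μ3 := h1
      _ = B * ∫ p, |u p| ^ (r - 1) ∂μ3 := h2
      _ ≤ B * (∫ p, |u p| ^ r ∂μ3) ^ ((r - 1) / r) := by
          exact mul_le_mul_of_nonneg_left h3 hB0
  -- (15) conclusion
  have hsum : (∫ p, ψg r (u p) * (pd vx u p * pd vx u p) ∂μ3)
      + (∫ p, ψg r (u p) * (pd vy u p * pd vy u p) ∂μ3)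
      + (∫ p, ψg r (u p) * (pd vt u p * pd vt u p) ∂μ3)
      ≤ 2 * ∫ p, φg r (u p) * (1 - Real.exp (F p)) ∂μ3 := by
    linarith [hI1x, hI1y, hI1t, hI2, hI3, hI4, hE1, hE2, hE1t, hE2t, hPDE, hM]
  have hBN0 : 0 ≤ B * (∫ p, |u p| ^ r ∂μ3) ^ ((r - 1) / r) :=
    mul_nonneg hB0 (Real.rpow_nonneg hN0 _)
  nlinarith [hsum, hTA, hT0, hGb, hBN0, hN0,
    mul_nonneg (show (0:ℝ) ≤ r - 2 by linarith) hT0,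
    mul_nonneg (show (0:ℝ) ≤ r - 2 by linarith) hBN0]

theorem stmt6' (F u : R3 → ℝ) (hF : Continuous F) (hFper : Periodic3 F)
    (hu : ContDiff ℝ 2 u) (huper : Periodic3 u)
    (hsol : CYeq' F u) (r : ℝ) (hr : 2 ≤ r)
    (B : ℝ) (hB : ∀ p : R3, |1 + Real.exp (F p)| ≤ B) :
    ∫ p in cube,
        |u p| ^ (r - 2) * ((pd vx u p) ^ 2 + (pd vy u p) ^ 2 + (pd vt u p) ^ 2)
      ≤ (1 / 4) * (∫ p in cube, |u p| ^ r)
        + (5 * r / 4) * B * (∫ p in cube, |u p| ^ r) ^ ((r - 1) / r) := by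
  rw [cube_integral_eq, cube_integral_eq]
  exact main_ineq F u hF hFper hu huper hsol r hr B hB

end CY6

/-- The integral gradient estimate: for every `r ≥ 2` and every
uniform bound `B` on `|1 + e^F|`,
`∫ |u|^(r−2) |∇u|² ≤ (1/4) ‖u‖_{L^r}^r + (5r/4) B ‖u‖_{L^r}^(r−1)`. -/
theorem stmt6 (F u : R3 → ℝ) (hF : Continuous F) (hFper : Periodic3 F)
    (hu : ContDiff ℝ 2 u) (huper : Periodic3 u) (humean : ZeroMean u)
    (hsol : CYeq F u) (r : ℝ) (hr : 2 ≤ r)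
    (B : ℝ) (hB : ∀ p : R3, |1 + Real.exp (F p)| ≤ B) :
    ∫ p in cube,
        |u p| ^ (r - 2) * ((pd vx u p) ^ 2 + (pd vy u p) ^ 2 + (pd vt u p) ^ 2)
      ≤ (1 / 4) * (∫ p in cube, |u p| ^ r)
        + (5 * r / 4) * B * (∫ p in cube, |u p| ^ r) ^ ((r - 1) / r) := by
  exact CY6.stmt6' F u hF hFper hu huper hsol r hr B hB

end
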